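/- Let F : ℝ^d → ℝ^d satisfy the blockwise Lipschitz assumption with positive semidefinite matrices Q¹,…,Qᵐ over the consecutive blocks S¹,…,Sᵐ, and let L² = ‖∑_{i=1}^m Q̂ⁱ‖. For x, y ∈ ℝ^d, define p ∈ ℝ^d blockwise by pⁱ = Fⁱ(x¹,…,x^{i−1}, yⁱ,…,yᵐ), i.e., pⁱ is the i-th block of F evaluated at the hybrid vector whose first i−1 blocks are those of x and whose blocks i through m are those of y. Then ‖F(x) − p‖² ≤ L² ‖x − y‖². -/

import Mathlib

open scoped RealInnerProductSpace

/-- Operator norm of a square real matrix, viewed as a linear map on Euclidean space. -/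
noncomputable def matOpNorm {d : ℕ} (Q : Matrix (Fin d) (Fin d) ℝ) : ℝ :=
  ‖Matrix.toEuclideanCLM (𝕜 := ℝ) Q‖

/-- The quadratic form `vᵀ Q v` on Euclidean space. -/
noncomputable def quadForm {d : ℕ} (Q : Matrix (Fin d) (Fin d) ℝ)
    (v : EuclideanSpace ℝ (Fin d)) : ℝ :=
  ⟪v, Matrix.toEuclideanCLM (𝕜 := ℝ) Q v⟫

lemma quadForm_coords {d : ℕ} (Q : Matrix (Fin d) (Fin d) ℝ)
    (v : EuclideanSpace ℝ (Fin d)) :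
    quadForm Q v = ∑ j, ∑ k, v j * (Q j k * v k) := by
  simp only [quadForm, PiLp.inner_apply, RCLike.inner_apply, starRingEnd_apply, star_trivial,
    show ∀ j, (Matrix.toEuclideanCLM (𝕜 := ℝ) Q v) j = ∑ k, Q j k * v k from fun _ => rfl,
    Finset.mul_sum]
  exact Finset.sum_congr rfl fun j _ => by
    rw [Finset.sum_mul]; exact Finset.sum_congr rfl fun k _ => by ring

lemma quadForm_le {d : ℕ} (Q : Matrix (Fin d) (Fin d) ℝ)
    (v : EuclideanSpace ℝ (Fin d)) :
    quadForm Q v ≤ matOpNorm Q * ‖v‖ ^ 2 := by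
  calc quadForm Q v ≤ ‖v‖ * ‖Matrix.toEuclideanCLM (𝕜 := ℝ) Q v‖ := real_inner_le_norm _ _
    _ ≤ ‖v‖ * (matOpNorm Q * ‖v‖) := by
        apply mul_le_mul_of_nonneg_left (ContinuousLinearMap.le_opNorm _ _) (norm_nonneg _)
    _ = matOpNorm Q * ‖v‖ ^ 2 := by ring

/-- **Statement 6.** Let `F` satisfy the blockwise Lipschitz assumption with PSD
matrices `Q¹,…,Qᵐ` over the consecutive blocks (encoded by a monotone block map
`blk`), let `Q̂ⁱ` be `Qⁱ` with the rows/columns of the first `i−1` blocks zeroed,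
and `L² = ‖∑ᵢ Q̂ⁱ‖`. If `p` is defined blockwise by
`pⁱ = Fⁱ(x¹,…,x^{i−1}, yⁱ,…,yᵐ)` (hybrid vectors), then
`‖F(x) − p‖² ≤ L² ‖x − y‖²`. -/
theorem stmt6 {d m : ℕ} (blk : Fin d → Fin m) (hblk : Monotone blk)
    (F : EuclideanSpace ℝ (Fin d) → EuclideanSpace ℝ (Fin d))
    (Q : Fin m → Matrix (Fin d) (Fin d) ℝ)
    (hpsd : ∀ i, (Q i).PosSemidef)
    (hlip : ∀ (i : Fin m) (z w : EuclideanSpace ℝ (Fin d)),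
      ∑ j ∈ Finset.univ.filter (fun j => blk j = i), (F z j - F w j) ^ 2
        ≤ quadForm (Q i) (z - w))
    (Qhat : Fin m → Matrix (Fin d) (Fin d) ℝ)
    (hQhat : ∀ (i : Fin m) (j k : Fin d),
      Qhat i j k = if i ≤ blk j ∧ i ≤ blk k then Q i j k else 0)
    (L : ℝ) (hL2 : L ^ 2 = matOpNorm (∑ i, Qhat i))
    (x y p : EuclideanSpace ℝ (Fin d))
    (hp : ∀ j : Fin d,
      p j = F (WithLp.toLp 2 (fun j' => if blk j' < blk j then x j' else y j')) j) :
    ‖F x - p‖ ^ 2 ≤ L ^ 2 * ‖x - y‖ ^ 2 := by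
  -- hybrid vectors
  set z : Fin m → EuclideanSpace ℝ (Fin d) :=
    fun i => WithLp.toLp 2 (fun j' => if blk j' < i then x j' else y j') with hz
  -- norm squared as a sum of squares
  have hnorm : ‖F x - p‖ ^ 2 = ∑ j, (F x j - p j) ^ 2 := by
    rw [EuclideanSpace.norm_eq, Real.sq_sqrt (by positivity)]
    refine Finset.sum_congr rfl fun j _ => ?_
    rw [show (F x - p) j = F x j - p j from rfl, Real.norm_eq_abs, sq_abs]
  -- key pointwise identity for quadForm
  have hquad : ∀ i : Fin m, quadForm (Q i) (x - z i) = quadForm (Qhat i) (x - y) := by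
    intro i
    rw [quadForm_coords, quadForm_coords]
    refine Finset.sum_congr rfl fun j _ => Finset.sum_congr rfl fun k _ => ?_
    have hxz : ∀ l : Fin d, (x - z i) l = if i ≤ blk l then x l - y l else 0 := by
      intro l
      show x l - z i l = _
      simp only [hz, WithLp.ofLp_toLp]
      by_cases h : i ≤ blk l
      · rw [if_pos h, if_neg (not_lt.2 h)]
      · rw [if_neg h, if_pos (lt_of_not_ge h), sub_self]
    rw [hxz, hxz, hQhat]
    by_cases hj : i ≤ blk j <;> by_cases hk : i ≤ blk k <;>
      simp [hj, hk, show (x - y) j = x j - y j from rfl, show (x - y) k = x k - y k from rfl]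
  -- sum of quadForms is quadForm of sum
  have hsum : ∑ i, quadForm (Qhat i) (x - y) = quadForm (∑ i, Qhat i) (x - y) := by
    simp only [quadForm, map_sum, ContinuousLinearMap.sum_apply, inner_sum]
  calc ‖F x - p‖ ^ 2
      = ∑ i, ∑ j ∈ Finset.univ.filter (fun j => blk j = i), (F x j - p j) ^ 2 := by
        rw [hnorm, Finset.sum_fiberwise]
    _ ≤ ∑ i, quadForm (Q i) (x - z i) := by
        refine Finset.sum_le_sum fun i _ => ?_
        refine le_trans (le_of_eq (Finset.sum_congr rfl fun j hj => ?_)) (hlip i x (z i))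
        rw [hp j, (Finset.mem_filter.1 hj).2]
    _ = ∑ i, quadForm (Qhat i) (x - y) := by
        exact Finset.sum_congr rfl fun i _ => hquad i
    _ = quadForm (∑ i, Qhat i) (x - y) := hsum
    _ ≤ matOpNorm (∑ i, Qhat i) * ‖x - y‖ ^ 2 := quadForm_le _ _
    _ = L ^ 2 * ‖x - y‖ ^ 2 := by rw [hL2]
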